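/- arXiv:2202.12770 — 3 statements merged into one kernel-verified Lean document; each statement's English description precedes it below -/
import Mathlib

section
/- Fix T > 0, an integer d ≥ 1, and real numbers β₁, …, β_d. Let Q be a d×d substochastic matrix with zero diagonal and Qⁿ → 0, and let ψ and φ be the associated regulator and content maps. Then the reflection map R = (φ, ψ) is Lipschitz continuous on ∏_{i=1}^d D^{β_i}[0,T] with respect to the product J₁ distance: there exists a constant C < ∞ such that for all ξ = (ξ⁽¹⁾,…,ξ⁽ᵈ⁾) and ζ = (ζ⁽¹⁾,…,ζ⁽ᵈ⁾) with ξ⁽ⁱ⁾, ζ⁽ⁱ⁾ ∈ D^{β_i}[0,T] for each i, one has d_p(φ(ξ), φ(ζ)) + d_p(ψ(ξ), ψ(ζ)) ≤ C · d_p(ξ, ζ). -/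
open Set Filter

noncomputable section

/-- `f` is càdlàg on `[0,T]`: right-continuous on `[0,T)` and with left limits on `(0,T]`. -/
def Cadlag (T : ℝ) (f : ℝ → ℝ) : Prop :=
  (∀ t ∈ Set.Ico (0:ℝ) T, Filter.Tendsto f (nhdsWithin t (Set.Ici t)) (nhds (f t))) ∧
  (∀ t ∈ Set.Ioc (0:ℝ) T, ∃ L : ℝ, Filter.Tendsto f (nhdsWithin t (Set.Iio t)) (nhds L))

/-- `lam` is a strictly increasing continuous bijection of `[0,T]` onto itself. -/
def IsTimeChange (T : ℝ) (lam : ℝ → ℝ) : Prop :=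
  StrictMonoOn lam (Set.Icc 0 T) ∧ ContinuousOn lam (Set.Icc 0 T) ∧
  Set.MapsTo lam (Set.Icc 0 T) (Set.Icc 0 T) ∧
  Set.SurjOn lam (Set.Icc 0 T) (Set.Icc 0 T) ∧ lam 0 = 0 ∧ lam T = T

/-- Uniform distance of two (bounded) functions over `[0,T]`. -/
def unifDist (T : ℝ) (f g : ℝ → ℝ) : ℝ :=
  sSup {r : ℝ | ∃ t ∈ Set.Icc (0:ℝ) T, r = |f t - g t|}

/-- The Skorokhod `J₁` distance on `[0,T]`. -/
def J1Dist (T : ℝ) (f g : ℝ → ℝ) : ℝ :=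
  sInf {r : ℝ | ∃ lam : ℝ → ℝ, IsTimeChange T lam ∧
    r = max (unifDist T (fun t => f (lam t)) g) (unifDist T lam id)}

/-- The product `J₁` distance on `d`-tuples of paths. -/
def prodJ1Dist (T : ℝ) {d : ℕ} (ξ ζ : Fin d → ℝ → ℝ) : ℝ :=
  ∑ i, J1Dist T (ξ i) (ζ i)

/-- A substochastic routing matrix with zero diagonal whose powers tend to zero. -/
def Substochastic {d : ℕ} (Q : Matrix (Fin d) (Fin d) ℝ) : Prop :=
  (∀ i j, 0 ≤ Q i j) ∧ (∀ i, Q i i = 0) ∧ (∀ i, ∑ j, Q i j ≤ 1) ∧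
  Filter.Tendsto (fun n : ℕ => Q ^ n) Filter.atTop (nhds 0)

/-- The reflection matrix `𝒬 = I - Qᵀ`. -/
def refMatrix {d : ℕ} (Q : Matrix (Fin d) (Fin d) ℝ) : Matrix (Fin d) (Fin d) ℝ :=
  1 - Q.transpose

/-- `ζ` belongs to the feasible regulator set `Ψ(ξ)`: each coordinate of `ζ` is a
nondecreasing càdlàg path, nonnegative at the origin, and `ξ + 𝒬 ζ ≥ 0` on `[0,T]`. -/
def Feasible (T : ℝ) {d : ℕ} (Q : Matrix (Fin d) (Fin d) ℝ)
    (ξ ζ : Fin d → ℝ → ℝ) : Prop :=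
  (∀ i, Cadlag T (ζ i) ∧ MonotoneOn (ζ i) (Set.Icc 0 T) ∧ 0 ≤ ζ i 0) ∧
  (∀ t ∈ Set.Icc (0:ℝ) T, ∀ i, 0 ≤ ξ i t + ∑ j, refMatrix Q i j * ζ j t)

/-- The regulator map `ψ`, defined coordinatewise and pointwise as the infimum of the
feasible regulator set. -/
def regulator (T : ℝ) {d : ℕ} (Q : Matrix (Fin d) (Fin d) ℝ)
    (ξ : Fin d → ℝ → ℝ) : Fin d → ℝ → ℝ :=
  fun i t => sInf {z : ℝ | ∃ ζ, Feasible T Q ξ ζ ∧ z = ζ i t}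

/-- The content map `φ(ξ) = ξ + 𝒬 ψ(ξ)`. -/
def content (T : ℝ) {d : ℕ} (Q : Matrix (Fin d) (Fin d) ℝ)
    (ξ : Fin d → ℝ → ℝ) : Fin d → ℝ → ℝ :=
  fun i t => ξ i t + ∑ j, refMatrix Q i j * regulator T Q ξ j t

/-- `D^β[0,T]`: càdlàg paths `f` with `f 0 ≥ 0` such that `t ↦ f t - β t` is nondecreasing. -/
def DBeta (T β : ℝ) (f : ℝ → ℝ) : Prop :=
  Cadlag T f ∧ 0 ≤ f 0 ∧ MonotoneOn (fun t => f t - β * t) (Set.Icc 0 T)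



lemma cadlag_of_continuous {T : ℝ} {f : ℝ → ℝ} (hf : Continuous f) : Cadlag T f := by
  refine ⟨fun t _ => (hf.tendsto t).mono_left nhdsWithin_le_nhds,
    fun t _ => ⟨f t, (hf.tendsto t).mono_left nhdsWithin_le_nhds⟩⟩

lemma Cadlag.add {T : ℝ} {f g : ℝ → ℝ} (hf : Cadlag T f) (hg : Cadlag T g) :
    Cadlag T (fun t => f t + g t) := by
  refine ⟨fun t ht => (hf.1 t ht).add (hg.1 t ht), fun t ht => ?_⟩
  obtain ⟨L1, h1⟩ := hf.2 t ht
  obtain ⟨L2, h2⟩ := hg.2 t ht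
  exact ⟨L1 + L2, h1.add h2⟩

lemma Cadlag.add_const {T : ℝ} {f : ℝ → ℝ} (hf : Cadlag T f) (c : ℝ) :
    Cadlag T (fun t => f t + c) :=
  hf.add (cadlag_of_continuous continuous_const)

lemma Cadlag.comp_mono {T : ℝ} {g σ : ℝ → ℝ} (hg : Cadlag T g)
    (hmono : Monotone σ) (hcont : Continuous σ)
    (hσ : ∀ t, 0 ≤ t → t ≤ T → 0 ≤ σ t ∧ σ t ≤ t) :
    Cadlag T (fun u => g (σ u)) := by
  constructor
  · intro t ht
    have hσt := hσ t ht.1 (le_of_lt ht.2)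
    have htend : Tendsto σ (nhdsWithin t (Ici t)) (nhdsWithin (σ t) (Ici (σ t))) := by
      rw [tendsto_nhdsWithin_iff]
      refine ⟨(hcont.tendsto t).mono_left nhdsWithin_le_nhds, ?_⟩
      filter_upwards [self_mem_nhdsWithin] with u hu
      exact hmono hu
    exact (hg.1 (σ t) ⟨hσt.1, lt_of_le_of_lt hσt.2 ht.2⟩).comp htend
  · intro t ht
    have hσt := hσ t (le_of_lt ht.1) ht.2
    by_cases hc : ∃ u ∈ Ioo (0:ℝ) t, σ u = σ t
    · obtain ⟨u, hu, huv⟩ := hc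
      refine ⟨g (σ t), ?_⟩
      have hmem : Ioo u t ∈ nhdsWithin t (Iio t) :=
        Ioo_mem_nhdsLT_of_mem ⟨hu.2, le_refl t⟩
      have : ∀ w ∈ Ioo u t, g (σ w) = g (σ t) := by
        intro w hw
        have h1 : σ u ≤ σ w := hmono (le_of_lt hw.1)
        have h2 : σ w ≤ σ t := hmono (le_of_lt hw.2)
        rw [le_antisymm h2 (huv ▸ h1)]
      refine Tendsto.congr' ?_ tendsto_const_nhds
      filter_upwards [hmem] with w hw
      exact (this w hw).symm
    · push_neg at hc
      have hlt : ∀ u ∈ Ioo (0:ℝ) t, σ u < σ t := by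
        intro u hu
        exact lt_of_le_of_ne (hmono (le_of_lt hu.2)) (hc u hu)
      have hpos : 0 < σ t := by
        have h2 : (t/2) ∈ Ioo (0:ℝ) t := ⟨by linarith [ht.1], by linarith [ht.1]⟩
        exact lt_of_le_of_lt (hσ (t/2) (le_of_lt h2.1) (by linarith [ht.2])).1 (hlt _ h2)
      obtain ⟨L, hL⟩ := hg.2 (σ t) ⟨hpos, le_trans hσt.2 ht.2⟩
      refine ⟨L, hL.comp ?_⟩
      rw [tendsto_nhdsWithin_iff]
      refine ⟨(hcont.tendsto t).mono_left nhdsWithin_le_nhds, ?_⟩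
      filter_upwards [Ioo_mem_nhdsLT_of_mem (⟨ht.1, le_refl t⟩ : t ∈ Ioc 0 t)] with u hu
      exact hlt u hu

lemma exists_good_x {d : ℕ} (Q : Matrix (Fin d) (Fin d) ℝ) (hQ : Substochastic Q) :
    ∃ x : Fin d → ℝ, (∀ i, 0 ≤ x i) ∧ (∀ i, 1 ≤ ∑ j, refMatrix Q i j * x j) := by
  have hpow : ∀ n, ∀ i j, 0 ≤ (Q ^ n) i j := by
    intro n
    induction n with
    | zero => intro i j; simp [Matrix.one_apply]; split <;> norm_num
    | succ n ih =>
      intro i j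
      rw [pow_succ, Matrix.mul_apply]
      exact Finset.sum_nonneg fun k _ => mul_nonneg (ih i k) (hQ.1 k j)
  set v : ℕ → Fin d → ℝ := fun n i => ∑ j, (Q ^ n) j i with hv
  have hv0 : ∀ i, v 0 i = 1 := by
    intro i; simp [hv, Matrix.one_apply]
  have hvnn : ∀ n i, 0 ≤ v n i := fun n i => Finset.sum_nonneg fun j _ => hpow n j i
  have hvrec : ∀ n i, ∑ j, Q j i * v n j = v (n+1) i := by
    intro n i
    simp only [hv, Finset.mul_sum, pow_succ, Matrix.mul_apply]
    rw [Finset.sum_comm]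
    congr 1; ext k
    congr 1; ext j
    ring
  -- entrywise convergence
  have htend : ∀ i, Tendsto (fun n => v n i) atTop (nhds 0) := by
    intro i
    have h1 : ∀ j, Tendsto (fun n => (Q ^ n) j i) atTop (nhds 0) := by
      intro j
      have := hQ.2.2.2
      have h2 := (tendsto_pi_nhds.mp this) j
      have h3 := (tendsto_pi_nhds.mp h2) i
      simpa using h3
    have := tendsto_finset_sum Finset.univ (fun j _ => h1 j)
    simpa using this
  have hev : ∀ᶠ n in atTop, ∀ i, v n i ≤ 1/2 := by
    rw [eventually_all]
    intro i
    have := (htend i).eventually (eventually_le_nhds (by norm_num : (0:ℝ) < 1/2))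
    exact this
  obtain ⟨N0, hN0⟩ := Filter.eventually_atTop.mp hev
  set N : ℕ := N0 with hNdef
  have hN : ∀ i, v (N+1) i ≤ 1/2 := hN0 (N+1) (Nat.le_succ N0)
  set s : Fin d → ℝ := fun i => ∑ n ∈ Finset.range (N+1), v n i with hs
  have hsrec : ∀ i, ∑ j, Q j i * s j = s i - 1 + v (N+1) i := by
    intro i
    have : ∑ j, Q j i * s j = ∑ n ∈ Finset.range (N+1), ∑ j, Q j i * v n j := by
      simp only [hs, Finset.mul_sum]
      rw [Finset.sum_comm]
    rw [this]
    simp only [hvrec]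
    have h2 : ∑ n ∈ Finset.range (N+1), v (n+1) i + v 0 i
        = ∑ n ∈ Finset.range (N+2), v n i :=
      (Finset.sum_range_succ' (fun n => v n i) (N+1)).symm
    have h3 : ∑ n ∈ Finset.range (N+2), v n i = s i + v (N+1) i := by
      rw [Finset.sum_range_succ]
    rw [hv0] at h2
    linarith
  have hsnn : ∀ i, 0 ≤ s i := fun i => Finset.sum_nonneg fun n _ => hvnn n i
  refine ⟨fun i => 2 * s i, fun i => by show (0:ℝ) ≤ 2 * s i; have := hsnn i; linarith, fun i => ?_⟩
  have hrm : ∀ j, refMatrix Q i j * (2 * s j)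
      = 2 * (((1 : Matrix (Fin d) (Fin d) ℝ) i j) * s j) - 2 * (Q j i * s j) := by
    intro j
    simp [refMatrix, Matrix.sub_apply, Matrix.transpose_apply]
    ring
  rw [Finset.sum_congr rfl (fun j _ => hrm j), Finset.sum_sub_distrib]
  have h1 : ∑ j, 2 * (((1 : Matrix (Fin d) (Fin d) ℝ) i j) * s j) = 2 * s i := by
    simp [Matrix.one_apply]
  have h2 : ∑ j, 2 * (Q j i * s j) = 2 * (s i - 1 + v (N+1) i) := by
    rw [← Finset.mul_sum, hsrec i]
  rw [h1, h2]
  have := hN i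
  linarith

section Aux


variable {d : ℕ} {T : ℝ} {Q : Matrix (Fin d) (Fin d) ℝ} {x : Fin d → ℝ} {B : ℝ}
  {ξ ζin : Fin d → ℝ → ℝ}

lemma sum_ref_split {i : Fin d} (f g : Fin d → ℝ) :
    ∑ j, refMatrix Q i j * (f j + g j)
      = ∑ j, refMatrix Q i j * f j + ∑ j, refMatrix Q i j * g j := by
  rw [← Finset.sum_add_distrib]
  exact Finset.sum_congr rfl fun j _ => by ring

lemma sum_ref_smul {i : Fin d} (c : ℝ) (f : Fin d → ℝ) :
    ∑ j, refMatrix Q i j * (c * f j) = c * ∑ j, refMatrix Q i j * f j := by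
  rw [Finset.mul_sum]
  exact Finset.sum_congr rfl fun j _ => by ring

lemma sset_bddBelow (hT : 0 ≤ T) {i : Fin d} {t : ℝ} (ht : t ∈ Icc (0:ℝ) T) :
    BddBelow {z : ℝ | ∃ ζ, Feasible T Q ξ ζ ∧ z = ζ i t} := by
  refine ⟨0, ?_⟩
  rintro z ⟨ζ, hζ, rfl⟩
  exact le_trans (hζ.1 i).2.2 ((hζ.1 i).2.1 ⟨le_refl 0, hT⟩ ht ht.1)

lemma reg_le_feas (hT : 0 ≤ T) {η : Fin d → ℝ → ℝ} (hη : Feasible T Q ξ η)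
    {i : Fin d} {t : ℝ} (ht : t ∈ Icc (0:ℝ) T) :
    regulator T Q ξ i t ≤ η i t :=
  csInf_le (sset_bddBelow hT ht) ⟨η, hη, rfl⟩

lemma le_reg {η0 : Fin d → ℝ → ℝ} (hη0 : Feasible T Q ξ η0) {a : ℝ} {i : Fin d} {t : ℝ}
    (h : ∀ η, Feasible T Q ξ η → a ≤ η i t) :
    a ≤ regulator T Q ξ i t :=
  le_csInf ⟨η0 i t, η0, hη0, rfl⟩ (by rintro z ⟨η, hη, rfl⟩; exact h η hη)

lemma reg_nonneg (hT : 0 ≤ T) {i : Fin d} {t : ℝ} (ht : t ∈ Icc (0:ℝ) T) :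
    0 ≤ regulator T Q ξ i t :=
  Real.sInf_nonneg (by
    rintro z ⟨ζ, hζ, rfl⟩
    exact le_trans (hζ.1 i).2.2 ((hζ.1 i).2.1 ⟨le_refl 0, hT⟩ ht ht.1))

/-- constant feasible path -/
lemma feasible_const (hx0 : ∀ i, 0 ≤ x i) (hx1 : ∀ i, 1 ≤ ∑ j, refMatrix Q i j * x j)
    {c : ℝ} (hc : 0 ≤ c) (hξ : ∀ i t, t ∈ Icc (0:ℝ) T → -c ≤ ξ i t) :
    Feasible T Q ξ (fun i _ => c * x i) := by
  constructor
  · intro i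
    exact ⟨cadlag_of_continuous continuous_const, monotoneOn_const,
      mul_nonneg hc (hx0 i)⟩
  · intro t ht i
    have h1 : c * 1 ≤ c * ∑ j, refMatrix Q i j * x j :=
      mul_le_mul_of_nonneg_left (hx1 i) hc
    have h2 := hξ i t ht
    have h3 : ∑ j, refMatrix Q i j * (c * x j) = c * ∑ j, refMatrix Q i j * x j :=
      sum_ref_smul c x
    rw [h3]
    linarith

/-- vertical shift comparison -/
lemma reg_shift (hT : 0 ≤ T) (hx0 : ∀ i, 0 ≤ x i)
    (hx1 : ∀ i, 1 ≤ ∑ j, refMatrix Q i j * x j)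
    {η0 : Fin d → ℝ → ℝ} (hη0 : Feasible T Q ζin η0)
    {ε : ℝ} (hε : 0 ≤ ε)
    (hle : ∀ i t, t ∈ Icc (0:ℝ) T → ζin i t - ε ≤ ξ i t)
    {i : Fin d} {t : ℝ} (ht : t ∈ Icc (0:ℝ) T) :
    regulator T Q ξ i t ≤ regulator T Q ζin i t + ε * x i := by
  have key : ∀ η, Feasible T Q ζin η →
      regulator T Q ξ i t - ε * x i ≤ η i t := by
    intro η hη
    have hfeas : Feasible T Q ξ (fun j u => η j u + ε * x j) := by
      constructor
      · intro j
        refine ⟨(hη.1 j).1.add (cadlag_of_continuous continuous_const), ?_, ?_⟩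
        · intro u hu v hv huv
          have := (hη.1 j).2.1 hu hv huv
          simpa using add_le_add_right this (ε * x j)
        · have := (hη.1 j).2.2
          have := mul_nonneg hε (hx0 j)
          simp only []
          linarith [(hη.1 j).2.2]
      · intro u hu j
        have hsplit : ∑ k, refMatrix Q j k * (η k u + ε * x k)
            = ∑ k, refMatrix Q j k * η k u + ε * ∑ k, refMatrix Q j k * x k := by
          rw [sum_ref_split (fun k => η k u) (fun k => ε * x k), sum_ref_smul ε x]
        rw [hsplit]
        have h1 := hη.2 u hu j
        have h2 := hle j u hu
        have h3 : ε * 1 ≤ ε * ∑ k, refMatrix Q j k * x k :=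
          mul_le_mul_of_nonneg_left (hx1 j) hε
        linarith
    have := reg_le_feas (ξ := ξ) (i := i) hT hfeas ht
    linarith
  have := le_reg hη0 (a := regulator T Q ξ i t - ε * x i) key
  linarith

/-- monotone in time -/
lemma reg_mono (hT : 0 ≤ T) {η0 : Fin d → ℝ → ℝ} (hη0 : Feasible T Q ξ η0)
    {i : Fin d} {s t : ℝ} (hs : s ∈ Icc (0:ℝ) T) (ht : t ∈ Icc (0:ℝ) T) (hst : s ≤ t) :
    regulator T Q ξ i s ≤ regulator T Q ξ i t := by
  refine le_csInf ⟨η0 i t, η0, hη0, rfl⟩ ?_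
  rintro z ⟨η, hη, rfl⟩
  exact le_trans (reg_le_feas hT hη hs) ((hη.1 i).2.1 hs ht hst)


/-- time Lipschitz: `reg ξ i t ≤ reg ξ i s + B * x i * (t - s)` -/
lemma reg_time_lip (hT : 0 ≤ T) (hx0 : ∀ i, 0 ≤ x i)
    (hx1 : ∀ i, 1 ≤ ∑ j, refMatrix Q i j * x j) (hB0 : 0 ≤ B)
    (hBlip : ∀ j a b, 0 ≤ a → a ≤ b → b ≤ T → ξ j a ≤ ξ j b + B * (b - a))
    {η0 : Fin d → ℝ → ℝ} (hη0 : Feasible T Q ξ η0)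
    {i : Fin d} {s t : ℝ} (hs : s ∈ Icc (0:ℝ) T) (ht : t ∈ Icc (0:ℝ) T) (hst : s ≤ t) :
    regulator T Q ξ i t ≤ regulator T Q ξ i s + B * x i * (t - s) := by
  have key : ∀ η, Feasible T Q ξ η →
      regulator T Q ξ i t - B * x i * (t - s) ≤ η i s := by
    intro η hη
    set ζt : Fin d → ℝ → ℝ := fun j u => η j (min u s) + B * x j * max (u - s) 0 with hζt
    have hfeas : Feasible T Q ξ ζt := by
      constructor
      · intro j
        refine ⟨?_, ?_, ?_⟩
        · refine Cadlag.add (Cadlag.comp_mono (hη.1 j).1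
            (monotone_id.min monotone_const) (continuous_id.min continuous_const)
            (fun u hu0 huT => ⟨le_min hu0 hs.1, min_le_left u s⟩)) ?_
          exact cadlag_of_continuous (by continuity)
        · intro u hu v hv huv
          have h1 : min u s ∈ Icc (0:ℝ) T := ⟨le_min hu.1 hs.1, le_trans (min_le_left u s) hu.2⟩
          have h2 : min v s ∈ Icc (0:ℝ) T := ⟨le_min hv.1 hs.1, le_trans (min_le_left v s) hv.2⟩
          have h3 := (hη.1 j).2.1 h1 h2 (min_le_min huv (le_refl s))
          have h4 : max (u - s) 0 ≤ max (v - s) 0 := max_le_max (by linarith) (le_refl 0)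
          have h5 : B * x j * max (u - s) 0 ≤ B * x j * max (v - s) 0 :=
            mul_le_mul_of_nonneg_left h4 (mul_nonneg hB0 (hx0 j))
          simp only [hζt]
          linarith
        · simp only [hζt]
          have h1 : min (0:ℝ) s = 0 := min_eq_left hs.1
          have h2 : max ((0:ℝ) - s) 0 = 0 := max_eq_right (by linarith [hs.1])
          rw [h1, h2]
          simpa using (hη.1 j).2.2
      · intro u hu j
        have hsplit : ∑ k, refMatrix Q j k * ζt k u
            = ∑ k, refMatrix Q j k * η k (min u s)
              + (B * max (u - s) 0) * ∑ k, refMatrix Q j k * x k := by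
          simp only [hζt]
          rw [sum_ref_split (fun k => η k (min u s)) (fun k => B * x k * max (u - s) 0)]
          congr 1
          rw [← sum_ref_smul (B * max (u - s) 0) x]
          exact Finset.sum_congr rfl fun k _ => by ring
        rw [hsplit]
        rcases le_or_gt u s with hus | hus
        · have h1 : min u s = u := min_eq_left hus
          have h2 : max (u - s) 0 = 0 := max_eq_right (by linarith)
          rw [h1, h2]
          simpa using hη.2 u hu j
        · have h1 : min u s = s := min_eq_right (le_of_lt hus)
          have h2 : max (u - s) 0 = u - s := max_eq_left (by linarith)
          rw [h1, h2]
          have h3 := hη.2 s hs j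
          have h4 := hBlip j s u hs.1 (le_of_lt hus) hu.2
          have h5 : (B * (u - s)) * 1 ≤ (B * (u - s)) * ∑ k, refMatrix Q j k * x k :=
            mul_le_mul_of_nonneg_left (hx1 j) (mul_nonneg hB0 (by linarith))
          linarith
    have hval : ζt i t = η i s + B * x i * (t - s) := by
      simp only [hζt]
      rw [min_eq_right hst, max_eq_left (by linarith)]
    have := reg_le_feas (ξ := ξ) (i := i) hT hfeas ht
    rw [hval] at this
    linarith
  have := le_reg hη0 (a := regulator T Q ξ i t - B * x i * (t - s)) key
  linarith

/-- composition with the delay `σ⁻ u = max (u - r) 0` decreases the regulator -/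
lemma reg_comp_minus (hT : 0 ≤ T) {r : ℝ} (hr : 0 ≤ r)
    {η0 : Fin d → ℝ → ℝ} (hη0 : Feasible T Q ξ η0)
    {i : Fin d} {t : ℝ} (ht : t ∈ Icc (0:ℝ) T) :
    regulator T Q (fun j u => ξ j (max (u - r) 0)) i t
      ≤ regulator T Q ξ i (max (t - r) 0) := by
  have hσ : ∀ u, 0 ≤ u → u ≤ T → 0 ≤ max (u - r) 0 ∧ max (u - r) 0 ≤ u :=
    fun u hu0 _ => ⟨le_max_right _ _, max_le (by linarith) hu0⟩
  have hmem : ∀ u, u ∈ Icc (0:ℝ) T → max (u - r) 0 ∈ Icc (0:ℝ) T :=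
    fun u hu => ⟨le_max_right _ _, le_trans (hσ u hu.1 hu.2).2 hu.2⟩
  have key : ∀ η, Feasible T Q ξ η →
      regulator T Q (fun j u => ξ j (max (u - r) 0)) i t ≤ η i (max (t - r) 0) := by
    intro η hη
    have hfeas : Feasible T Q (fun j u => ξ j (max (u - r) 0))
        (fun j u => η j (max (u - r) 0)) := by
      constructor
      · intro j
        refine ⟨Cadlag.comp_mono (hη.1 j).1
          ((Monotone.max (fun a b hab => by show a - r ≤ b - r; linarith) monotone_const : Monotone fun u => max (u - r) 0))
          ((continuous_id.sub continuous_const).max continuous_const)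
          (fun u hu0 huT => hσ u hu0 huT), ?_, ?_⟩
        · intro u hu v hv huv
          exact (hη.1 j).2.1 (hmem u hu) (hmem v hv)
            (max_le_max (by linarith) (le_refl 0))
        · have h0 : max ((0:ℝ) - r) 0 = 0 := max_eq_right (by linarith)
          simp only [h0]
          exact (hη.1 j).2.2
      · intro u hu j
        exact hη.2 (max (u - r) 0) (hmem u hu) j
    exact reg_le_feas (i := i) hT hfeas ht
  exact le_csInf ⟨η0 i (max (t - r) 0), η0, hη0, rfl⟩
    (by rintro z ⟨η, hη, rfl⟩; exact key η hη)

lemma cadlag_delay {T r : ℝ} (hr : 0 ≤ r) {g : ℝ → ℝ} (hg : Cadlag T g) :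
    Cadlag T (fun u => if u < r then 0 else g (u - r)) := by
  constructor
  · intro t ht
    rcases lt_or_ge t r with htr | htr
    · have hev : ∀ᶠ u in nhdsWithin t (Ici t), (if u < r then (0:ℝ) else g (u - r)) = 0 := by
        filter_upwards [nhdsWithin_le_nhds (Iio_mem_nhds htr)] with u hu
        rw [if_pos (mem_Iio.mp hu)]
      rw [show ((fun u => if u < r then (0:ℝ) else g (u - r)) t) = 0 from if_pos htr]
      exact Tendsto.congr' (by filter_upwards [hev] with u hu; exact hu.symm) tendsto_const_nhds
    · have hev : ∀ᶠ u in nhdsWithin t (Ici t),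
          g (u - r) = (if u < r then (0:ℝ) else g (u - r)) := by
        filter_upwards [self_mem_nhdsWithin] with u hu
        rw [if_neg (not_lt.mpr (le_trans htr hu))]
      have htsub : Tendsto (fun u => u - r) (nhdsWithin t (Ici t))
          (nhdsWithin (t - r) (Ici (t - r))) := by
        rw [tendsto_nhdsWithin_iff]
        refine ⟨((continuous_id.sub continuous_const).tendsto t).mono_left nhdsWithin_le_nhds, ?_⟩
        filter_upwards [self_mem_nhdsWithin] with u hu
        exact sub_le_sub_right hu r
      have := (hg.1 (t - r) ⟨by linarith [ht.1], by linarith [ht.2]⟩).comp htsub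
      rw [show ((fun u => if u < r then (0:ℝ) else g (u - r)) t) = g (t - r) from
        if_neg (not_lt.mpr htr)]
      exact Tendsto.congr' hev this
  · intro t ht
    rcases le_or_gt t r with htr | htr
    · refine ⟨0, ?_⟩
      refine Tendsto.congr' ?_ tendsto_const_nhds
      filter_upwards [self_mem_nhdsWithin] with u hu
      rw [if_pos (lt_of_lt_of_le hu htr)]
    · obtain ⟨L, hL⟩ := hg.2 (t - r) ⟨by linarith, by linarith [ht.2]⟩
      have htsub : Tendsto (fun u => u - r) (nhdsWithin t (Iio t))
          (nhdsWithin (t - r) (Iio (t - r))) := by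
        rw [tendsto_nhdsWithin_iff]
        refine ⟨((continuous_id.sub continuous_const).tendsto t).mono_left nhdsWithin_le_nhds, ?_⟩
        filter_upwards [self_mem_nhdsWithin] with u hu
        exact sub_lt_sub_right hu r
      refine ⟨L, Tendsto.congr' ?_ (hL.comp htsub)⟩
      filter_upwards [Ioo_mem_nhdsLT_of_mem (⟨htr, le_refl t⟩ : t ∈ Ioc r t)] with u hu
      simp only [Function.comp]
      rw [if_neg (not_lt.mpr (le_of_lt hu.1))]

/-- the regulator of `ξ` is at most that of the advanced path `ξ(min (·+r) T)` plus a constant -/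
lemma reg_le_comp_plus (hT : 0 ≤ T) (hx0 : ∀ i, 0 ≤ x i)
    (hx1 : ∀ i, 1 ≤ ∑ j, refMatrix Q i j * x j) (hB0 : 0 ≤ B) {r : ℝ} (hr : 0 ≤ r)
    (hlow : ∀ i u, u ∈ Icc (0:ℝ) T → -(B * u) ≤ ξ i u)
    {η0 : Fin d → ℝ → ℝ} (hη0 : Feasible T Q (fun j u => ξ j (min (u + r) T)) η0)
    {i : Fin d} {t : ℝ} (ht : t ∈ Icc (0:ℝ) T) :
    regulator T Q ξ i t
      ≤ regulator T Q (fun j u => ξ j (min (u + r) T)) i t + (B * min r T) * x i := by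
  set a : ℝ := B * min r T with ha
  have ha0 : 0 ≤ a := mul_nonneg hB0 (le_min hr hT)
  have key : ∀ η, Feasible T Q (fun j u => ξ j (min (u + r) T)) η →
      regulator T Q ξ i t - a * x i ≤ η i t := by
    intro η hη
    set ζp : Fin d → ℝ → ℝ :=
      fun j u => (if u < r then 0 else η j (u - r)) + a * x j with hζp
    have hηnn : ∀ j u, u ∈ Icc (0:ℝ) T → 0 ≤ η j u := fun j u hu =>
      le_trans (hη.1 j).2.2 ((hη.1 j).2.1 ⟨le_refl 0, hT⟩ hu hu.1)
    have hFmono : ∀ j, ∀ u ∈ Icc (0:ℝ) T, ∀ v ∈ Icc (0:ℝ) T, u ≤ v →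
        (if u < r then (0:ℝ) else η j (u - r)) ≤ (if v < r then 0 else η j (v - r)) := by
      intro j u hu v hv huv
      rcases lt_or_ge u r with h1 | h1
      · rw [if_pos h1]
        rcases lt_or_ge v r with h2 | h2
        · rw [if_pos h2]
        · rw [if_neg (not_lt.mpr h2)]
          exact hηnn j (v - r) ⟨by linarith, by linarith [hv.2]⟩
      · rw [if_neg (not_lt.mpr h1), if_neg (not_lt.mpr (le_trans h1 huv))]
        exact (hη.1 j).2.1 ⟨by linarith, by linarith [hu.2]⟩
          ⟨by linarith [hu.1, h1], by linarith [hv.2]⟩ (by linarith)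
    have hfeas : Feasible T Q ξ ζp := by
      constructor
      · intro j
        refine ⟨(cadlag_delay hr (hη.1 j).1).add (cadlag_of_continuous continuous_const),
          ?_, ?_⟩
        · intro u hu v hv huv
          have := hFmono j u hu v hv huv
          simp only [hζp]
          linarith
        · simp only [hζp]
          have h2 : (0:ℝ) ≤ if (0:ℝ) < r then 0 else η j (0 - r) := by
            rcases lt_or_ge (0:ℝ) r with h | h
            · rw [if_pos h]
            · rw [if_neg (not_lt.mpr h)]
              have hr0 : r = 0 := le_antisymm h hr
              simpa [hr0] using (hη.1 j).2.2
          have := mul_nonneg ha0 (hx0 j)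
          linarith
      · intro u hu j
        have hsplit : ∑ k, refMatrix Q j k * ζp k u
            = ∑ k, refMatrix Q j k * (if u < r then (0:ℝ) else η k (u - r))
              + a * ∑ k, refMatrix Q j k * x k := by
          simp only [hζp]
          rw [sum_ref_split (fun k => if u < r then (0:ℝ) else η k (u - r))
            (fun k => a * x k), sum_ref_smul a x]
        rw [hsplit]
        have hax : a * 1 ≤ a * ∑ k, refMatrix Q j k * x k :=
          mul_le_mul_of_nonneg_left (hx1 j) ha0
        rcases lt_or_ge u r with h1 | h1
        · simp only [if_pos h1, mul_zero, Finset.sum_const_zero]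
          have h2 := hlow j u hu
          have h3 : B * u ≤ a := by
            rw [ha]
            exact mul_le_mul_of_nonneg_left (le_min (le_of_lt h1) hu.2) hB0
          linarith
        · simp only [if_neg (not_lt.mpr h1)]
          have h2 : 0 ≤ ξ j (min (u - r + r) T) + ∑ k, refMatrix Q j k * η k (u - r) :=
            hη.2 (u - r) ⟨by linarith, by linarith [hu.2]⟩ j
          have h3 : min (u - r + r) T = u := by
            rw [min_eq_left (by linarith [hu.2])]
            ring
          rw [h3] at h2
          linarith
    have hval : ζp i t ≤ η i t + a * x i := by
      simp only [hζp]
      have : (if t < r then (0:ℝ) else η i (t - r)) ≤ η i t := by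
        rcases lt_or_ge t r with h1 | h1
        · rw [if_pos h1]; exact hηnn i t ht
        · rw [if_neg (not_lt.mpr h1)]
          exact (hη.1 i).2.1 ⟨by linarith [ht.1, h1], by linarith [ht.2]⟩ ht (by linarith)
      linarith
    have := reg_le_feas (ξ := ξ) (i := i) hT hfeas ht
    linarith
  have := le_reg hη0 (a := regulator T Q ξ i t - a * x i) key
  linarith

end Aux


section Helpers

variable {T : ℝ} {d : ℕ}

lemma dbeta_bound {T β : ℝ} (hT : 0 ≤ T) {f : ℝ → ℝ} (hf : DBeta T β f)
    {t : ℝ} (ht : t ∈ Icc (0:ℝ) T) : |f t| ≤ |f T| + |β| * T := by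
  have hm := hf.2.2
  have h0 := hf.2.1
  have h1 : f t - β * t ≤ f T - β * T := hm ht ⟨hT, le_refl T⟩ ht.2
  have h2 : f 0 - β * 0 ≤ f t - β * t := hm ⟨le_refl 0, hT⟩ ht ht.1
  have hb1 : (-|β|) * t ≤ β * t := mul_le_mul_of_nonneg_right (neg_abs_le β) ht.1
  have hb2 : |β| * t ≤ |β| * T := mul_le_mul_of_nonneg_left ht.2 (abs_nonneg β)
  have hb3 : β * t - β * T ≤ |β| * (T - t) := by
    have : -(β * (T - t)) ≤ |β| * (T - t) :=
      le_trans (neg_le_abs _) (by rw [abs_mul, abs_of_nonneg (by linarith [ht.2] : (0:ℝ) ≤ T - t)])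
    linarith [this]
  have hb4 : |β| * (T - t) ≤ |β| * T := mul_le_mul_of_nonneg_left (by linarith [ht.1]) (abs_nonneg β)
  have e0 : β * 0 = 0 := mul_zero β
  rw [abs_le]
  constructor
  · linarith [abs_nonneg (f T)]
  · linarith [le_abs_self (f T)]

lemma isTimeChange_id (T : ℝ) : IsTimeChange T id :=
  ⟨fun a _ b _ hab => hab, continuousOn_id, fun a ha => ha,
    fun a ha => ⟨a, ha, rfl⟩, rfl, rfl⟩

lemma J1_bddBelow {f g : ℝ → ℝ} :
    BddBelow {r : ℝ | ∃ lam : ℝ → ℝ, IsTimeChange T lam ∧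
      r = max (unifDist T (fun t => f (lam t)) g) (unifDist T lam id)} := by
  refine ⟨0, ?_⟩
  rintro z ⟨lam, hlam, rfl⟩
  exact le_max_of_le_left (Real.sSup_nonneg (by rintro w ⟨t, ht, rfl⟩; exact abs_nonneg _))

lemma J1Dist_nonneg {f g : ℝ → ℝ} : 0 ≤ J1Dist T f g :=
  Real.sInf_nonneg (by
    rintro z ⟨lam, hlam, rfl⟩
    exact le_max_of_le_left (Real.sSup_nonneg (by rintro w ⟨t, ht, rfl⟩; exact abs_nonneg _)))

lemma J1Dist_le_timechange {f g lam : ℝ → ℝ} (hlam : IsTimeChange T lam) :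
    J1Dist T f g ≤ max (unifDist T (fun t => f (lam t)) g) (unifDist T lam id) :=
  csInf_le J1_bddBelow ⟨lam, hlam, rfl⟩

lemma unifDist_le (hT : 0 ≤ T) {f g : ℝ → ℝ} {M : ℝ}
    (h : ∀ t ∈ Icc (0:ℝ) T, |f t - g t| ≤ M) : unifDist T f g ≤ M :=
  csSup_le ⟨|f 0 - g 0|, 0, ⟨le_refl 0, hT⟩, rfl⟩ (by rintro z ⟨t, ht, rfl⟩; exact h t ht)

end Helpers


set_option maxHeartbeats 1000000 in
/-- The reflection map `R = (φ, ψ)` is Lipschitz continuous on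
`∏_{i=1}^d D^{β_i}[0,T]` with respect to the product `J₁` distance. -/
theorem reflection_map_lipschitz_prodJ1
    (T : ℝ) (hT : 0 < T) (d : ℕ) (hd : 1 ≤ d) (β : Fin d → ℝ)
    (Q : Matrix (Fin d) (Fin d) ℝ) (hQ : Substochastic Q) :
    ∃ C : ℝ, ∀ ξ ζ : Fin d → ℝ → ℝ,
      (∀ i, DBeta T (β i) (ξ i)) → (∀ i, DBeta T (β i) (ζ i)) →
      prodJ1Dist T (content T Q ξ) (content T Q ζ) +
          prodJ1Dist T (regulator T Q ξ) (regulator T Q ζ) ≤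
        C * prodJ1Dist T ξ ζ := by
  obtain ⟨x, hx0, hx1⟩ := exists_good_x Q hQ
  set B : ℝ := ∑ i, |β i| with hB
  have hB0 : 0 ≤ B := Finset.sum_nonneg fun i _ => abs_nonneg _
  have hβB : ∀ j, |β j| ≤ B :=
    fun j => Finset.single_le_sum (f := fun i => |β i|) (fun i _ => abs_nonneg _)
      (Finset.mem_univ j)
  set K : ℝ := 1 + 2 * B with hK
  set L : Fin d → ℝ := fun i => (K + B) * x i with hL
  have hL0 : ∀ i, 0 ≤ L i := fun i => mul_nonneg (by rw [hK]; linarith) (hx0 i)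
  set M : Fin d → ℝ := fun i => 1 + ∑ j, |refMatrix Q i j| * (B * x j + L j) with hM
  have hM1 : ∀ i, 1 ≤ M i := by
    intro i
    have : (0:ℝ) ≤ ∑ j, |refMatrix Q i j| * (B * x j + L j) :=
      Finset.sum_nonneg fun j _ => mul_nonneg (abs_nonneg _)
        (add_nonneg (mul_nonneg hB0 (hx0 j)) (hL0 j))
    simp only [hM]; linarith
  set C : ℝ := ∑ i, M i + ∑ i, L i with hC
  have hC0 : 0 ≤ C := by
    have h1 : (0:ℝ) ≤ ∑ i, M i := Finset.sum_nonneg fun i _ => le_trans zero_le_one (hM1 i)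
    have h2 : (0:ℝ) ≤ ∑ i, L i := Finset.sum_nonneg fun i _ => hL0 i
    rw [hC]; linarith
  refine ⟨C, fun ξ ζ hξ hζ => ?_⟩
  set D : ℝ := prodJ1Dist T ξ ζ with hD
  have hD0 : 0 ≤ D := Finset.sum_nonneg fun i _ => J1Dist_nonneg
  -- basic path facts
  have hBlip : ∀ (f : Fin d → ℝ → ℝ), (∀ i, DBeta T (β i) (f i)) →
      ∀ j a b, 0 ≤ a → a ≤ b → b ≤ T → f j a ≤ f j b + B * (b - a) := by
    intro f hf j a b ha hab hbT
    have h1 : f j a - β j * a ≤ f j b - β j * b :=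
      (hf j).2.2 ⟨ha, le_trans hab hbT⟩ ⟨le_trans ha hab, hbT⟩ hab
    have h2 : -(β j) * (b - a) ≤ |β j| * (b - a) :=
      mul_le_mul_of_nonneg_right (neg_le_abs _) (by linarith)
    have h3 : |β j| * (b - a) ≤ B * (b - a) :=
      mul_le_mul_of_nonneg_right (hβB j) (by linarith)
    have e : (-(β j)) * (b - a) = β j * a - β j * b := by ring
    linarith [h1, h2, h3]
  have hlowf : ∀ (f : Fin d → ℝ → ℝ), (∀ i, DBeta T (β i) (f i)) →
      ∀ i u, u ∈ Icc (0:ℝ) T → -(B * u) ≤ f i u := by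
    intro f hf i u hu
    have h1 : f i 0 - β i * 0 ≤ f i u - β i * u := (hf i).2.2 ⟨le_refl 0, hT.le⟩ hu hu.1
    have h0 := (hf i).2.1
    have h2 : -|β i| * u ≤ β i * u := mul_le_mul_of_nonneg_right (neg_abs_le _) hu.1
    have h3 : |β i| * u ≤ B * u := mul_le_mul_of_nonneg_right (hβB i) hu.1
    have e0 : β i * 0 = 0 := mul_zero _
    have e1 : -|β i| * u = -(|β i| * u) := by ring
    linarith
  set c : ℝ := B * T with hc
  have hc0 : 0 ≤ c := mul_nonneg hB0 hT.le
  have hlowc : ∀ (f : Fin d → ℝ → ℝ), (∀ i, DBeta T (β i) (f i)) →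
      ∀ i u, u ∈ Icc (0:ℝ) T → -c ≤ f i u := by
    intro f hf i u hu
    have := hlowf f hf i u hu
    have : B * u ≤ B * T := mul_le_mul_of_nonneg_left hu.2 hB0
    linarith [hlowf f hf i u hu]
  have hηξ : Feasible T Q ξ (fun i _ => c * x i) :=
    feasible_const hx0 hx1 hc0 (hlowc ξ hξ)
  have hηζ : Feasible T Q ζ (fun i _ => c * x i) :=
    feasible_const hx0 hx1 hc0 (hlowc ζ hζ)
  -- reduce to: ∀ ε > 0, LHS ≤ C * D + ε
  refine le_of_forall_pos_le_add ?_
  intro ε hε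
  set δ : ℝ := ε / (C + 1) with hδ
  have hδ0 : 0 < δ := div_pos hε (by linarith)
  set r : ℝ := D + δ with hr
  have hr0 : 0 < r := by rw [hr]; linarith
  -- choose time changes
  have hchoice : ∀ j : Fin d, ∃ lam : ℝ → ℝ, IsTimeChange T lam ∧
      max (unifDist T (fun t => ξ j (lam t)) (ζ j)) (unifDist T lam id) < r := by
    intro j
    have hne : {s : ℝ | ∃ lam : ℝ → ℝ, IsTimeChange T lam ∧
        s = max (unifDist T (fun t => ξ j (lam t)) (ζ j)) (unifDist T lam id)}.Nonempty :=
      ⟨_, id, isTimeChange_id T, rfl⟩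
    have hjD : J1Dist T (ξ j) (ζ j) ≤ D :=
      Finset.single_le_sum (f := fun i => J1Dist T (ξ i) (ζ i))
        (fun i _ => J1Dist_nonneg) (Finset.mem_univ j)
    have hlt : sInf {s : ℝ | ∃ lam : ℝ → ℝ, IsTimeChange T lam ∧
        s = max (unifDist T (fun t => ξ j (lam t)) (ζ j)) (unifDist T lam id)} < r := by
      have : J1Dist T (ξ j) (ζ j) < r := by rw [hr]; linarith
      exact this
    obtain ⟨s, ⟨lam, hlam, rfl⟩, hs⟩ := exists_lt_of_csInf_lt hne hlt
    exact ⟨lam, hlam, hs⟩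
  choose lam hlamtc hlammax using hchoice
  -- pointwise closeness
  have hlamIcc : ∀ j t, t ∈ Icc (0:ℝ) T → lam j t ∈ Icc (0:ℝ) T :=
    fun j t ht => (hlamtc j).2.2.1 ht
  have hlam_close : ∀ j t, t ∈ Icc (0:ℝ) T → |lam j t - t| ≤ r := by
    intro j t ht
    have hbdd : BddAbove {z : ℝ | ∃ s ∈ Icc (0:ℝ) T, z = |lam j s - id s|} := by
      refine ⟨2 * T, ?_⟩
      rintro z ⟨s, hs, rfl⟩
      simp only [id_eq]
      have h1 := hlamIcc j s hs
      have : |lam j s - s| ≤ |lam j s| + |s| := abs_sub _ _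
      have h2 : |lam j s| ≤ T := abs_le.mpr ⟨by linarith [h1.1], h1.2⟩
      have h3 : |s| ≤ T := abs_le.mpr ⟨by linarith [hs.1], hs.2⟩
      linarith
    have hmem : |lam j t - t| ∈ {z : ℝ | ∃ s ∈ Icc (0:ℝ) T, z = |lam j s - id s|} :=
      ⟨t, ht, by simp⟩
    exact le_trans (le_csSup hbdd hmem)
      (le_of_lt (lt_of_le_of_lt (le_max_right _ _) (hlammax j)))
  have hval_close : ∀ j t, t ∈ Icc (0:ℝ) T → |ξ j (lam j t) - ζ j t| ≤ r := by
    intro j t ht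
    have hbdd : BddAbove {z : ℝ | ∃ s ∈ Icc (0:ℝ) T, z = |ξ j (lam j s) - ζ j s|} := by
      refine ⟨(|ξ j T| + |β j| * T) + (|ζ j T| + |β j| * T), ?_⟩
      rintro z ⟨s, hs, rfl⟩
      have h1 := dbeta_bound hT.le (hξ j) (hlamIcc j s hs)
      have h2 := dbeta_bound hT.le (hζ j) hs
      have := abs_sub (ξ j (lam j s)) (ζ j s)
      linarith
    exact le_trans (le_csSup hbdd ⟨t, ht, rfl⟩)
      (le_of_lt (lt_of_le_of_lt (le_max_left _ _) (hlammax j)))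
  -- sandwich bounds
  have hlow_sand : ∀ j t, t ∈ Icc (0:ℝ) T →
      ξ j (max (t - r) 0) - K * r ≤ ζ j t := by
    intro j t ht
    have h1 : |ξ j (lam j t) - ζ j t| ≤ r := hval_close j t ht
    have h2 := hlam_close j t ht
    have hmem := hlamIcc j t ht
    have hσle : max (t - r) 0 ≤ lam j t := by
      rw [abs_le] at h2
      exact max_le (by linarith [h2.1]) hmem.1
    have h3 := hBlip ξ hξ j (max (t - r) 0) (lam j t) (le_max_right _ _) hσle hmem.2
    have h4 : lam j t - max (t - r) 0 ≤ 2 * r := by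
      rw [abs_le] at h2
      have := le_max_left (t - r) 0
      linarith [h2.2]
    have h5 : B * (lam j t - max (t - r) 0) ≤ B * (2 * r) :=
      mul_le_mul_of_nonneg_left h4 hB0
    rw [abs_le] at h1
    have eK : K * r = r + B * (2 * r) := by simp only [hK]; ring
    linarith [h1.1, h3, h5, eK]
  have hup_sand : ∀ j t, t ∈ Icc (0:ℝ) T →
      ζ j t - K * r ≤ ξ j (min (t + r) T) := by
    intro j t ht
    have h1 : |ξ j (lam j t) - ζ j t| ≤ r := hval_close j t ht
    have h2 := hlam_close j t ht
    have hmem := hlamIcc j t ht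
    have hσge : lam j t ≤ min (t + r) T := by
      rw [abs_le] at h2
      exact le_min (by linarith [h2.2]) hmem.2
    have h3 := hBlip ξ hξ j (lam j t) (min (t + r) T) hmem.1 hσge
      (min_le_right _ _)
    have h4 : min (t + r) T - lam j t ≤ 2 * r := by
      rw [abs_le] at h2
      have := min_le_left (t + r) T
      linarith [h2.1]
    have h5 : B * (min (t + r) T - lam j t) ≤ B * (2 * r) :=
      mul_le_mul_of_nonneg_left h4 hB0
    rw [abs_le] at h1
    have eK : K * r = r + B * (2 * r) := by simp only [hK]; ring
    linarith [h1.2, h3, h5, eK]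
  -- feasible witnesses for shifted paths
  have hησm : Feasible T Q (fun j u => ξ j (max (u - r) 0)) (fun i _ => c * x i) := by
    refine feasible_const hx0 hx1 hc0 ?_
    intro i u hu
    refine hlowc ξ hξ i (max (u - r) 0) ⟨le_max_right _ _, ?_⟩
    exact max_le (by linarith [hu.2]) hT.le
  have hησp : Feasible T Q (fun j u => ξ j (min (u + r) T)) (fun i _ => c * x i) := by
    refine feasible_const hx0 hx1 hc0 ?_
    intro i u hu
    refine hlowc ξ hξ i (min (u + r) T) ⟨le_min (by linarith [hu.1, hr0]) hT.le, min_le_right _ _⟩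
  -- the regulator sup bound
  have hKr0 : 0 ≤ K * r := mul_nonneg (by rw [hK]; linarith) hr0.le
  have hreg_close : ∀ i t, t ∈ Icc (0:ℝ) T →
      |regulator T Q ξ i t - regulator T Q ζ i t| ≤ L i * r := by
    intro i t ht
    have hσmIcc : max (t - r) 0 ∈ Icc (0:ℝ) T :=
      ⟨le_max_right _ _, max_le (by linarith [ht.2]) hT.le⟩
    -- upper: reg ζ ≤ reg ξ + K r x i
    have step1 : regulator T Q ζ i t
        ≤ regulator T Q (fun j u => ξ j (max (u - r) 0)) i t + (K * r) * x i :=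
      reg_shift hT.le hx0 hx1 hησm hKr0 hlow_sand ht
    have step2 : regulator T Q (fun j u => ξ j (max (u - r) 0)) i t
        ≤ regulator T Q ξ i (max (t - r) 0) :=
      reg_comp_minus hT.le hr0.le hηξ ht
    have step3 : regulator T Q ξ i (max (t - r) 0) ≤ regulator T Q ξ i t :=
      reg_mono hT.le hηξ hσmIcc ht (max_le (by linarith [ht.1]) ht.1)
    -- lower: reg ξ ≤ reg ζ + (K+B) r x i
    have step4 : regulator T Q ξ i t
        ≤ regulator T Q (fun j u => ξ j (min (u + r) T)) i t + (B * min r T) * x i :=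
      reg_le_comp_plus hT.le hx0 hx1 hB0 hr0.le (hlowf ξ hξ) hησp ht
    have step5 : regulator T Q (fun j u => ξ j (min (u + r) T)) i t
        ≤ regulator T Q ζ i t + (K * r) * x i :=
      reg_shift hT.le hx0 hx1 hηζ hKr0 hup_sand ht
    have hminr : B * min r T ≤ B * r := mul_le_mul_of_nonneg_left (min_le_left _ _) hB0
    have hxr : (B * min r T) * x i ≤ B * r * x i :=
      mul_le_mul_of_nonneg_right hminr (hx0 i)
    have e1 : L i * r = (K * r) * x i + (B * r) * x i := by simp only [hL]; ring
    rw [abs_le]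
    constructor
    · linarith [step1, step2, step3, e1, mul_nonneg (mul_nonneg hB0 hr0.le) (hx0 i)]
    · linarith [step4, step5, hxr, e1]
  -- time-Lipschitz for reg ξ
  have hreg_time : ∀ i (u t : ℝ), u ∈ Icc (0:ℝ) T → t ∈ Icc (0:ℝ) T → |u - t| ≤ r →
      |regulator T Q ξ i u - regulator T Q ξ i t| ≤ B * x i * r := by
    intro i u t hu ht hut
    have hBx0 : 0 ≤ B * x i := mul_nonneg hB0 (hx0 i)
    rw [abs_le] at hut
    rcases le_total u t with h | h
    · have h1 := reg_mono (ξ := ξ) (i := i) hT.le hηξ hu ht h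
      have h2 := reg_time_lip (i := i) hT.le hx0 hx1 hB0 (hBlip ξ hξ) hηξ hu ht h
      have h3 : B * x i * (t - u) ≤ B * x i * r :=
        mul_le_mul_of_nonneg_left (by linarith [hut.1]) hBx0
      rw [abs_le]
      constructor <;> linarith
    · have h1 := reg_mono (ξ := ξ) (i := i) hT.le hηξ ht hu h
      have h2 := reg_time_lip (i := i) hT.le hx0 hx1 hB0 (hBlip ξ hξ) hηξ ht hu h
      have h3 : B * x i * (u - t) ≤ B * x i * r :=
        mul_le_mul_of_nonneg_left (by linarith [hut.2]) hBx0
      rw [abs_le]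
      constructor <;> linarith
  -- ψ part
  have hpsi : ∀ i : Fin d,
      J1Dist T (regulator T Q ξ i) (regulator T Q ζ i) ≤ L i * r := by
    intro i
    have hLr0 : 0 ≤ L i * r := mul_nonneg (hL0 i) hr0.le
    refine le_trans (J1Dist_le_timechange (isTimeChange_id T)) (max_le ?_ ?_)
    · refine unifDist_le hT.le ?_
      intro t ht
      exact hreg_close i t ht
    · refine unifDist_le hT.le ?_
      intro t ht
      simpa using hLr0
  -- φ part
  have hphi : ∀ i : Fin d,
      J1Dist T (content T Q ξ i) (content T Q ζ i) ≤ M i * r := by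
    intro i
    refine le_trans (J1Dist_le_timechange (hlamtc i)) (max_le ?_ ?_)
    · refine unifDist_le hT.le ?_
      intro t ht
      have hmem := hlamIcc i t ht
      have h1 : |ξ i (lam i t) - ζ i t| ≤ r := hval_close i t ht
      have h2 : ∀ j, |regulator T Q ξ j (lam i t) - regulator T Q ζ j t|
          ≤ B * x j * r + L j * r := by
        intro j
        have ha := hreg_time j (lam i t) t hmem ht (hlam_close i t ht)
        have hb := hreg_close j t ht
        calc |regulator T Q ξ j (lam i t) - regulator T Q ζ j t|
            ≤ |regulator T Q ξ j (lam i t) - regulator T Q ξ j t|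
              + |regulator T Q ξ j t - regulator T Q ζ j t| := abs_sub_le _ _ _
          _ ≤ B * x j * r + L j * r := add_le_add ha hb
      have hdiff : content T Q ξ i (lam i t) - content T Q ζ i t
          = (ξ i (lam i t) - ζ i t)
            + ∑ j, refMatrix Q i j * (regulator T Q ξ j (lam i t) - regulator T Q ζ j t) := by
        simp only [content]
        rw [Finset.sum_congr rfl (fun j _ => mul_sub (refMatrix Q i j) _ _),
          Finset.sum_sub_distrib]
        ring
      rw [hdiff]
      calc |(ξ i (lam i t) - ζ i t)
            + ∑ j, refMatrix Q i j * (regulator T Q ξ j (lam i t) - regulator T Q ζ j t)|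
          ≤ |ξ i (lam i t) - ζ i t|
            + |∑ j, refMatrix Q i j * (regulator T Q ξ j (lam i t) - regulator T Q ζ j t)| :=
            abs_add_le _ _
        _ ≤ r + ∑ j, |refMatrix Q i j| * (B * x j * r + L j * r) := by
            refine add_le_add h1 ?_
            refine le_trans (Finset.abs_sum_le_sum_abs _ _) ?_
            refine Finset.sum_le_sum fun j _ => ?_
            rw [abs_mul]
            exact mul_le_mul_of_nonneg_left (h2 j) (abs_nonneg _)
        _ = M i * r := by
            simp only [hM]
            rw [add_mul, one_mul, Finset.sum_mul]
            congr 1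
            exact Finset.sum_congr rfl fun j _ => by ring
    · refine unifDist_le hT.le ?_
      intro t ht
      have h2 := hlam_close i t ht
      have : |lam i t - id t| = |lam i t - t| := rfl
      rw [this]
      calc |lam i t - t| ≤ r := h2
        _ ≤ M i * r := le_mul_of_one_le_left hr0.le (hM1 i)
  -- sum up
  have hsum : prodJ1Dist T (content T Q ξ) (content T Q ζ) +
      prodJ1Dist T (regulator T Q ξ) (regulator T Q ζ) ≤ C * r := by
    have h1 : prodJ1Dist T (content T Q ξ) (content T Q ζ) ≤ (∑ i, M i) * r := by
      rw [Finset.sum_mul]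
      exact Finset.sum_le_sum fun i _ => hphi i
    have h2 : prodJ1Dist T (regulator T Q ξ) (regulator T Q ζ) ≤ (∑ i, L i) * r := by
      rw [Finset.sum_mul]
      exact Finset.sum_le_sum fun i _ => hpsi i
    rw [hC, add_mul]
    linarith
  have hfinal : C * r ≤ C * D + ε := by
    rw [hr, mul_add]
    have : C * δ ≤ ε := by
      rw [hδ]
      have h1 : C * (ε / (C + 1)) = ε * C / (C + 1) := by ring
      rw [h1, div_le_iff₀ (by linarith : (0:ℝ) < C + 1)]
      exact mul_le_mul_of_nonneg_left (by linarith : C ≤ C + 1) hε.le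
    linarith
  linarith
end
end

section
/- (Two-node tandem buffer formula.) Let T > 0, rates 0 ≤ μ₁ < r₁, μ₂ ≥ 0, r₂ > 0 with μ₁ + μ₂ ≤ r₂, a jump size x₁ ∈ [0, (r₁−μ₁)T] at node 1, and a jump size x₂ ≥ 0 at node 2. Set u₁ = T − x₁/(r₁−μ₁) and define, for t ∈ [0,T]: the input to node 1, J₁(t) = μ₁t + x₁𝟙{t ≥ u₁}; the netput of node 1, X₁(t) = J₁(t) − r₁t; the buffer content of node 1, z₁(t) = X₁(t) − min(0, inf_{s∈[0,t]} X₁(s)); the cumulative output of node 1, O(t) = J₁(t) − z₁(t); the netput of node 2, X₂(t) = O(t) + μ₂t + x₂𝟙{t ≥ T} − r₂t; and the buffer content of node 2 at time T, z₂(T) = X₂(T) − min(0, inf_{u∈[0,T]} X₂(u)). Then z₂(T) = x₂ + max(r₁ + μ₂ − r₂, 0) · x₁/(r₁−μ₁). In particular, if r₂ ≥ r₁ + μ₂ then z₂(T) = x₂, i.e. the jump at node 1 has no effect on the buffer content of node 2 at time T. -/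
open Set

set_option maxHeartbeats 1000000

noncomputable section

/-- (Two-node tandem buffer formula.) With a single jump of size `x₁` at node 1
timed so that the busy period of node 1 ends exactly at `T`, and a single jump of size `x₂` at
node 2 at time `T`, the buffer content of node 2 at time `T` equals
`x₂ + max(r₁ + μ₂ - r₂, 0) · x₁/(r₁ - μ₁)`; in particular it equals `x₂` when `r₂ ≥ r₁ + μ₂`. -/
theorem tandem_buffer_formula
    (T μ₁ μ₂ r₁ r₂ x₁ x₂ : ℝ)
    (hT : 0 < T) (hμ₁ : 0 ≤ μ₁) (hμ₁r : μ₁ < r₁) (hμ₂ : 0 ≤ μ₂) (hr₂ : 0 < r₂)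
    (hstab : μ₁ + μ₂ ≤ r₂)
    (hx₁ : 0 ≤ x₁) (hx₁T : x₁ ≤ (r₁ - μ₁) * T) (hx₂ : 0 ≤ x₂)
    (u₁ : ℝ) (hu₁ : u₁ = T - x₁ / (r₁ - μ₁))
    (J₁ : ℝ → ℝ) (hJ₁ : J₁ = fun t => μ₁ * t + if u₁ ≤ t then x₁ else 0)
    (X₁ : ℝ → ℝ) (hX₁ : X₁ = fun t => J₁ t - r₁ * t)
    (z₁ : ℝ → ℝ) (hz₁ : z₁ = fun t => X₁ t - min 0 (sInf (X₁ '' Set.Icc 0 t)))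
    (O : ℝ → ℝ) (hO : O = fun t => J₁ t - z₁ t)
    (X₂ : ℝ → ℝ)
    (hX₂ : X₂ = fun t => O t + μ₂ * t + (if T ≤ t then x₂ else 0) - r₂ * t)
    (z₂T : ℝ) (hz₂T : z₂T = X₂ T - min 0 (sInf (X₂ '' Set.Icc 0 T))) :
    z₂T = x₂ + max (r₁ + μ₂ - r₂) 0 * (x₁ / (r₁ - μ₁)) ∧
    (r₁ + μ₂ ≤ r₂ → z₂T = x₂) := by
  have hsub : (0:ℝ) < r₁ - μ₁ := by linarith
  have hx₁eq : x₁ = (r₁ - μ₁) * (T - u₁) := by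
    rw [hu₁]; field_simp; ring
  have ha0 : 0 ≤ T - u₁ := by nlinarith
  have hu₁T : u₁ ≤ T := by linarith
  have hu₁0 : 0 ≤ u₁ := by
    have : x₁ / (r₁ - μ₁) ≤ T := by
      rw [div_le_iff₀ hsub]; linarith [hx₁T]
    rw [hu₁]; linarith
  -- closed form for X₁
  have hX₁val : ∀ s : ℝ, X₁ s = (μ₁ - r₁) * s + (if u₁ ≤ s then x₁ else 0) := by
    intro s; rw [hX₁, hJ₁]; ring
  -- Step A: reflection at node 1
  have hA : ∀ t : ℝ, 0 ≤ t → t ≤ T →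
      min 0 (sInf (X₁ '' Set.Icc 0 t)) = (μ₁ - r₁) * min t u₁ := by
    intro t ht0 htT
    set S := X₁ '' Set.Icc 0 t with hS
    have hne : S.Nonempty := ⟨X₁ 0, mem_image_of_mem _ ⟨le_refl 0, ht0⟩⟩
    set c := (μ₁ - r₁) * min t u₁ with hc
    have hlb : ∀ y ∈ S, c ≤ y := by
      rintro y ⟨s, ⟨hs0, hst⟩, rfl⟩
      rw [hX₁val]
      have hsT : s ≤ T := le_trans hst htT
      have hm1 : min t u₁ ≤ t := min_le_left _ _
      have hm2 : min t u₁ ≤ u₁ := min_le_right _ _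
      by_cases h : u₁ ≤ s
      · rw [if_pos h, hx₁eq]
        have : s - T + u₁ ≤ min t u₁ := le_min (by linarith) (by linarith)
        nlinarith
      · rw [if_neg h]
        push_neg at h
        have : s ≤ min t u₁ := le_min hst h.le
        nlinarith
    have hbdd : BddBelow S := ⟨c, hlb⟩
    have hlb' : c ≤ sInf S := le_csInf hne hlb
    have hc0 : c ≤ 0 := by
      have : 0 ≤ min t u₁ := le_min ht0 hu₁0
      nlinarith
    by_cases ht : u₁ ≤ t
    · -- min t u₁ = u₁
      have hmin : min t u₁ = u₁ := min_eq_right ht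
      by_cases hu0 : u₁ = 0
      · -- c = 0 and all values are ≥ 0
        have hc' : c = 0 := by rw [hc, hmin, hu0]; ring
        rw [hc']
        exact min_eq_left (by rw [← hc']; exact hlb')
      · have hu0' : 0 < u₁ := lt_of_le_of_ne hu₁0 (Ne.symm hu0)
        have hub : sInf S ≤ c := by
          apply le_of_forall_pos_le_add
          intro ε hε
          set s := max 0 (u₁ - ε / (r₁ - μ₁)) with hsdef
          have hεd : 0 < ε / (r₁ - μ₁) := div_pos hε hsub
          have hslt : s < u₁ := by
            apply max_lt hu0'; linarith
          have hs0 : 0 ≤ s := le_max_left _ _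
          have hsge : u₁ - ε / (r₁ - μ₁) ≤ s := le_max_right _ _
          have hmem : X₁ s ∈ S := mem_image_of_mem _ ⟨hs0, le_trans hslt.le ht⟩
          have hXval : X₁ s = (μ₁ - r₁) * s := by
            rw [hX₁val, if_neg (not_le.mpr hslt)]; ring
          have hkey : X₁ s ≤ c + ε := by
            rw [hXval, hc, hmin]
            have : (r₁ - μ₁) * (ε / (r₁ - μ₁)) = ε := by field_simp
            nlinarith
          exact le_trans (csInf_le hbdd hmem) hkey
        have : sInf S = c := le_antisymm hub hlb'
        rw [this]; exact min_eq_right hc0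
    · push_neg at ht
      have hmin : min t u₁ = t := min_eq_left ht.le
      have hmem : X₁ t ∈ S := mem_image_of_mem _ ⟨ht0, le_refl t⟩
      have hXval : X₁ t = c := by
        rw [hX₁val, if_neg (not_le.mpr ht), hc, hmin]; ring
      have hub : sInf S ≤ c := hXval ▸ csInf_le hbdd hmem
      have : sInf S = c := le_antisymm hub hlb'
      rw [this]; exact min_eq_right hc0
  -- closed form for X₂ on [0,T]
  have hX₂val : ∀ s : ℝ, 0 ≤ s → s ≤ T →
      X₂ s = (r₁ + μ₂ - r₂) * s + (μ₁ - r₁) * min s u₁ + (if T ≤ s then x₂ else 0) := by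
    intro s hs0 hsT
    rw [hX₂, hO, hz₁]
    simp only
    rw [hA s hs0 hsT, hX₁]
    ring
  -- the infimum of X₂ over [0,T]
  set slope := r₁ + μ₂ - r₂ with hslope
  set m₂ := slope * T + (μ₁ - r₁) * u₁ + max slope 0 * (u₁ - T) with hm₂
  have hm₂0 : m₂ ≤ 0 := by
    rcases le_or_gt slope 0 with h | h
    · rw [hm₂, max_eq_right h]; nlinarith
    · rw [hm₂, max_eq_left h.le]
      have : m₂ = (μ₁ + μ₂ - r₂) * u₁ := by rw [hm₂, max_eq_left h.le, hslope]; ring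
      rw [hm₂, max_eq_left h.le] at this; rw [this]; nlinarith
  set S := X₂ '' Set.Icc 0 T with hS
  have hne : S.Nonempty := ⟨X₂ 0, mem_image_of_mem _ ⟨le_refl 0, hT.le⟩⟩
  have hlb : ∀ y ∈ S, m₂ ≤ y := by
    rintro y ⟨s, ⟨hs0, hsT⟩, rfl⟩
    rw [hX₂val s hs0 hsT]
    have hind : (0:ℝ) ≤ (if T ≤ s then x₂ else 0) := by positivity
    rcases le_total s u₁ with hsu | hsu
    · rw [min_eq_left hsu]
      rcases le_or_gt slope 0 with h | h
      · rw [hm₂, max_eq_right h]; nlinarith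
      · rw [hm₂, max_eq_left h.le]; nlinarith
    · rw [min_eq_right hsu]
      rcases le_or_gt slope 0 with h | h
      · rw [hm₂, max_eq_right h]; nlinarith
      · rw [hm₂, max_eq_left h.le]; nlinarith
  have hbdd : BddBelow S := ⟨m₂, hlb⟩
  have hlb' : m₂ ≤ sInf S := le_csInf hne hlb
  have hub : sInf S ≤ m₂ := by
    rcases lt_or_ge 0 slope with hpos | hneg
    · rcases eq_or_lt_of_le hu₁T with heq | hlt
      · -- u₁ = T : epsilon argument, m₂ = (μ₁+μ₂-r₂)T
        apply le_of_forall_pos_le_add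
        intro ε hε
        set C := (r₂ - μ₁ - μ₂) + 1 with hC
        have hC0 : (0:ℝ) < C := by nlinarith
        set s := max 0 (T - ε / C) with hsdef
        have hεd : 0 < ε / C := div_pos hε hC0
        have hslt : s < T := max_lt hT (by linarith)
        have hs0 : 0 ≤ s := le_max_left _ _
        have hsge : T - ε / C ≤ s := le_max_right _ _
        have hCε : C * (ε / C) = ε := by field_simp
        have hmem : X₂ s ∈ S := mem_image_of_mem _ ⟨hs0, hslt.le⟩
        have hmins : min s u₁ = s := min_eq_left (by linarith [heq])
        have hXval : X₂ s = slope * s + (μ₁ - r₁) * s := by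
          rw [hX₂val s hs0 hslt.le, if_neg (not_le.mpr hslt), hmins]; ring
        have hm₂' : m₂ = slope * T + (μ₁ - r₁) * T := by
          rw [hm₂, max_eq_left hpos.le, ← heq]; ring
        have hkey : X₂ s ≤ m₂ + ε := by
          rw [hXval, hm₂']
          have h1 : 0 ≤ T - s := by linarith
          have h2 : T - s ≤ ε / C := by linarith
          have h3 : slope * s + (μ₁ - r₁) * s - (slope * T + (μ₁ - r₁) * T)
              = (r₂ - μ₁ - μ₂) * (T - s) := by rw [hslope]; ring
          have h4 : (r₂ - μ₁ - μ₂) * (T - s) ≤ C * (ε / C) :=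
            mul_le_mul (by rw [hC]; linarith) h2 h1 hC0.le
          linarith [hCε ▸ h4]
        exact le_trans (csInf_le hbdd hmem) hkey
      · -- u₁ < T : minimum attained at u₁
        have hmem : X₂ u₁ ∈ S := mem_image_of_mem _ ⟨hu₁0, hu₁T⟩
        have hXval : X₂ u₁ = m₂ := by
          rw [hX₂val u₁ hu₁0 hu₁T, if_neg (not_le.mpr hlt), min_self,
            hm₂, max_eq_left hpos.le]
          ring
        exact hXval ▸ csInf_le hbdd hmem
    · -- slope ≤ 0 : epsilon argument at T
      apply le_of_forall_pos_le_add
      intro ε hε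
      set C := (r₂ - μ₁ - μ₂) + 1 with hC
      have hC0 : (0:ℝ) < C := by nlinarith
      set s := max 0 (T - ε / C) with hsdef
      have hεd : 0 < ε / C := div_pos hε hC0
      have hslt : s < T := max_lt hT (by linarith)
      have hs0 : 0 ≤ s := le_max_left _ _
      have hsge : T - ε / C ≤ s := le_max_right _ _
      have hCε : C * (ε / C) = ε := by field_simp
      have hmem : X₂ s ∈ S := mem_image_of_mem _ ⟨hs0, hslt.le⟩
      have hm₂' : m₂ = slope * T + (μ₁ - r₁) * u₁ := by
        rw [hm₂, max_eq_right hneg]; ring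
      have hkey : X₂ s ≤ m₂ + ε := by
        rw [hX₂val s hs0 hslt.le, if_neg (not_le.mpr hslt), hm₂']
        have h1 : 0 ≤ T - s := by linarith
        have h2 : T - s ≤ ε / C := by linarith
        rcases le_total s u₁ with hsu | hsu
        · rw [min_eq_left hsu]
          have h3 : slope * s + (μ₁ - r₁) * s + 0 - (slope * T + (μ₁ - r₁) * u₁)
              = (-slope) * (T - s) + (r₁ - μ₁) * (u₁ - s) := by ring
          have h5 : (-slope) * (T - s) + (r₁ - μ₁) * (u₁ - s)
              ≤ (r₂ - μ₁ - μ₂) * (T - s) := by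
            have : (r₁ - μ₁) * (u₁ - s) ≤ (r₁ - μ₁) * (T - s) :=
              mul_le_mul_of_nonneg_left (by linarith) hsub.le
            rw [hslope]; nlinarith
          have h4 : (r₂ - μ₁ - μ₂) * (T - s) ≤ C * (ε / C) :=
            mul_le_mul (by rw [hC]; linarith) h2 h1 hC0.le
          linarith [hCε ▸ h4]
        · rw [min_eq_right hsu]
          have h3 : slope * s + (μ₁ - r₁) * u₁ + 0 - (slope * T + (μ₁ - r₁) * u₁)
              = (-slope) * (T - s) := by ring
          have h4 : (-slope) * (T - s) ≤ C * (ε / C) :=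
            mul_le_mul (by rw [hC, hslope]; linarith) h2 h1 hC0.le
          linarith [hCε ▸ h4]
      exact le_trans (csInf_le hbdd hmem) hkey
  have hInf : sInf S = m₂ := le_antisymm hub hlb'
  have hminInf : min 0 (sInf S) = m₂ := by rw [hInf]; exact min_eq_right hm₂0
  have hXT : X₂ T = slope * T + (μ₁ - r₁) * u₁ + x₂ := by
    rw [hX₂val T hT.le (le_refl T), if_pos (le_refl T), min_eq_right hu₁T]
  have hTu : T - u₁ = x₁ / (r₁ - μ₁) := by rw [hu₁]; ring
  have hz₂ : z₂T = x₂ + max slope 0 * (x₁ / (r₁ - μ₁)) := by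
    rw [hz₂T, hminInf, hXT, hm₂, ← hTu]; ring
  constructor
  · rw [hz₂]
  · intro hle
    rw [hz₂, hslope, max_eq_right (by linarith : r₁ + μ₂ - r₂ ≤ 0)]
    ring
end
end

section
/- Fix T > 0, d ≥ 1, and a d×d substochastic matrix Q with zero diagonal and Qⁿ → 0, with regulator map ψ and content map φ. Let a = (a₁,…,a_d) ∈ ℝ^d with all a_i ≥ 0, and let ξ = (ξ⁽¹⁾,…,ξ⁽ᵈ⁾) ∈ ∏_{i=1}^d D[0,T] be such that each ξ⁽ⁱ⁾ has only nonnegative jumps (ξ⁽ⁱ⁾(t) ≥ ξ⁽ⁱ⁾(t−) for all t ∈ (0,T]) and at most one discontinuity point. Define ζ⁽ⁱ⁾(t) = ξ⁽ⁱ⁾(t) + a_i 𝟙{t = T}. Then: (i) ψ(ζ) = ψ(ξ) (equality of functions on [0,T]); (ii) φ(ζ)(T) = φ(ξ)(T) + a; (iii) for any α ∈ (0,1) and any c₁,…,c_d ≥ 0, Σ_{i=1}^d c_i Σ_{t∈(0,T]: Δζ⁽ⁱ⁾(t)>0} (Δζ⁽ⁱ⁾(t))^α ≤ Σ_{i=1}^d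 c_i Σ_{t∈(0,T]: Δξ⁽ⁱ⁾(t)>0} (Δξ⁽ⁱ⁾(t))^α + Σ_{i=1}^d c_i a_i^α, where Δf(t) = f(t) − f(t−). -/
open Set Filter

noncomputable section

/-- The jump cost `Σ_{t ∈ (0,T] : Δf(t) > 0} (Δf(t))^α`, where `Δf(t) = f(t) - f(t-)`. -/
def jumpCost (T α : ℝ) (f : ℝ → ℝ) : ℝ :=
  ∑' t : {t : ℝ // t ∈ Set.Ioc 0 T ∧ 0 < f t - Function.leftLim f t},
    (f t.1 - Function.leftLim f t.1) ^ α

section AuxAddJump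

open Function Topology

lemma rpow_subadd {x y α : ℝ} (hx : 0 ≤ x) (hy : 0 ≤ y) (hα : 0 ≤ α) (hα1 : α ≤ 1) :
    (x + y) ^ α ≤ x ^ α + y ^ α := by
  have h := NNReal.rpow_add_le_add_rpow x.toNNReal y.toNNReal hα hα1
  have h' := NNReal.coe_le_coe.2 h
  push_cast at h'
  rwa [Real.coe_toNNReal x hx, Real.coe_toNNReal y hy] at h'

lemma tsum_set_empty' {g : ℝ → ℝ} {S : Set ℝ} (h : S = ∅) : ∑' t : S, g t = 0 := by
  subst h; exact tsum_empty

lemma tsum_set_singleton' {g : ℝ → ℝ} {S : Set ℝ} {b : ℝ} (h : S = {b}) :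
    ∑' t : S, g t = g b := by subst h; exact tsum_singleton b g

lemma tsum_set_pair' {g : ℝ → ℝ} {S : Set ℝ} {b c : ℝ} (hbc : b ≠ c) (h : S = {b, c}) :
    ∑' t : S, g t = g b + g c := by
  subst h
  have h2 : ({b, c} : Set ℝ) = (({b, c} : Finset ℝ) : Set ℝ) := by simp
  rw [h2, Finset.tsum_subtype', Finset.sum_pair hbc]

lemma jumpCost_def (T α : ℝ) (f : ℝ → ℝ) :
    jumpCost T α f =
      ∑' t : ({t : ℝ | t ∈ Set.Ioc 0 T ∧ 0 < f t - Function.leftLim f t} : Set ℝ),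
        (f ↑t - Function.leftLim f ↑t) ^ α := rfl

end AuxAddJump

open Function Topology


/-- Adding a jump of size `aᵢ ≥ 0` at the terminal time `T` to a tuple of
càdlàg paths with nonnegative jumps and at most one discontinuity each does not change the
regulator, increases the terminal buffer content by exactly `a`, and increases the jump cost
by at most `Σᵢ cᵢ aᵢ^α`. -/
theorem add_jump_at_T
    (T : ℝ) (hT : 0 < T) (d : ℕ) (hd : 1 ≤ d)
    (Q : Matrix (Fin d) (Fin d) ℝ) (hQ : Substochastic Q)
    (a : Fin d → ℝ) (ha : ∀ i, 0 ≤ a i)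
    (ξ : Fin d → ℝ → ℝ) (hξ : ∀ i, Cadlag T (ξ i))
    (hpos : ∀ i, ∀ t ∈ Set.Ioc (0:ℝ) T, Function.leftLim (ξ i) t ≤ ξ i t)
    (hone : ∀ i, {t | t ∈ Set.Ioc (0:ℝ) T ∧ Function.leftLim (ξ i) t ≠ ξ i t}.Subsingleton) :
    (∀ i, ∀ t ∈ Set.Icc (0:ℝ) T,
      regulator T Q (fun i t => ξ i t + if t = T then a i else 0) i t =
        regulator T Q ξ i t) ∧
    (∀ i, content T Q (fun i t => ξ i t + if t = T then a i else 0) i T =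
        content T Q ξ i T + a i) ∧
    (∀ α : ℝ, α ∈ Set.Ioo (0:ℝ) 1 → ∀ c : Fin d → ℝ, (∀ i, 0 ≤ c i) →
      ∑ i, c i * jumpCost T α (fun t => ξ i t + if t = T then a i else 0) ≤
        ∑ i, c i * jumpCost T α (ξ i) + ∑ i, c i * a i ^ α) := by
  classical
  set Xi : Fin d → ℝ → ℝ := fun i t => ξ i t + if t = T then a i else 0 with hXi
  have hTIoc : T ∈ Set.Ioc (0:ℝ) T := ⟨hT, le_refl T⟩
  have hTIcc : T ∈ Set.Icc (0:ℝ) T := ⟨hT.le, le_refl T⟩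
  have hnb : ∀ t : ℝ, (𝓝[<] t).NeBot := fun t => inferInstance
  -- Xi agrees with ξ to the left of any t ≤ T
  have hagree : ∀ i, ∀ t : ℝ, t ≤ T → (fun s => ξ i s) =ᶠ[𝓝[<] t] (Xi i) := by
    intro i t ht
    filter_upwards [self_mem_nhdsWithin] with s hs
    have hsT : s ≠ T := by
      intro h; rw [h] at hs; exact absurd ht (not_le.2 hs)
    simp [hXi, hsT]
  have hll : ∀ i, ∀ t ∈ Set.Ioc (0:ℝ) T, Function.leftLim (Xi i) t = Function.leftLim (ξ i) t := by
    intro i t ht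
    obtain ⟨L, hL⟩ := (hξ i).2 t ht
    rw [leftLim_eq_of_tendsto hL,
      leftLim_eq_of_tendsto (Filter.Tendsto.congr' (hagree i t ht.2) hL)]
  -- Part (i): feasibility transfer
  have hmono : ∀ ζ, Feasible T Q ξ ζ → Feasible T Q Xi ζ := by
    rintro ζ ⟨h1, h2⟩
    refine ⟨h1, fun t ht i => ?_⟩
    have h := h2 t ht i
    have hai : (0:ℝ) ≤ if t = T then a i else 0 := by
      by_cases h : t = T
      · simp [h, ha i]
      · simp [h]
    have : Xi i t = ξ i t + (if t = T then a i else 0) := rfl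
    rw [this]; linarith
  have hback : ∀ ζ, Feasible T Q Xi ζ → ∃ ζ', Feasible T Q ξ ζ' ∧
      (∀ j t, t ≠ T → ζ' j t = ζ j t) ∧ (∀ j, ζ' j T ≤ ζ j T) := by
    rintro ζ ⟨h1, h2⟩
    choose L hL using fun j => (h1 j).1.2 T hTIoc
    set ζ' : Fin d → ℝ → ℝ := fun j t => if t = T then L j else ζ j t with hζ'
    have hne : ∀ j t, t ≠ T → ζ' j t = ζ j t := fun j t ht => by simp [hζ', ht]
    have hζ'T : ∀ j, ζ' j T = L j := fun j => by simp [hζ']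
    have hLle : ∀ j, L j ≤ ζ j T := by
      intro j
      refine le_of_tendsto (hL j) ?_
      filter_upwards [Ioo_mem_nhdsLT_of_mem hTIoc] with s hs
      exact (h1 j).2.1 ⟨hs.1.le, hs.2.le⟩ hTIcc hs.2.le
    have hLge : ∀ j, ∀ s ∈ Set.Icc (0:ℝ) T, s < T → ζ j s ≤ L j := by
      intro j s hs hsT
      refine ge_of_tendsto (hL j) ?_
      filter_upwards [Ioo_mem_nhdsLT hsT] with u hu
      exact (h1 j).2.1 hs ⟨hs.1.trans hu.1.le, hu.2.le⟩ hu.1.le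
    have hfeas : Feasible T Q ξ ζ' := by
      constructor
      · intro j
        refine ⟨⟨?_, ?_⟩, ?_, ?_⟩
        · intro t ht
          have hev : (fun s => ζ j s) =ᶠ[𝓝[≥] t] ζ' j := by
            filter_upwards [nhdsWithin_le_nhds (Iio_mem_nhds ht.2)] with s hs
            exact (hne j s (ne_of_lt hs)).symm
          rw [hne j t (ne_of_lt ht.2)]
          exact Filter.Tendsto.congr' hev ((h1 j).1.1 t ht)
        · intro t ht
          obtain ⟨M, hM⟩ := (h1 j).1.2 t ht
          refine ⟨M, Filter.Tendsto.congr' ?_ hM⟩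
          filter_upwards [self_mem_nhdsWithin] with s hs
          have hsT : s ≠ T := ne_of_lt (lt_of_lt_of_le hs ht.2)
          exact (hne j s hsT).symm
        · intro s hs t ht hst
          by_cases htT : t = T
          · by_cases hsT : s = T
            · exact le_of_eq (by rw [hsT, htT])
            · rw [hne j s hsT, htT, hζ'T j]
              exact hLge j s hs (lt_of_le_of_ne (htT ▸ hst) hsT)
          · have hsT : s ≠ T := ne_of_lt (lt_of_le_of_lt hst (lt_of_le_of_ne ht.2 htT))
            rw [hne j s hsT, hne j t htT]
            exact (h1 j).2.1 hs ht hst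
        · rw [hne j 0 (ne_of_lt hT)]
          exact (h1 j).2.2
      · intro t ht i
        by_cases htT : t = T
        · rw [htT]
          obtain ⟨Li, hLi⟩ := (hξ i).2 T hTIoc
          have hξleft : Function.leftLim (ξ i) T = Li :=
            leftLim_eq_of_tendsto hLi
          have hFlim : Filter.Tendsto (fun s => ξ i s + ∑ j, refMatrix Q i j * ζ j s)
              (𝓝[<] T) (𝓝 (Li + ∑ j, refMatrix Q i j * L j)) :=
            hLi.add (tendsto_finset_sum _ fun j _ => (hL j).const_mul _)
          have h0 : 0 ≤ Li + ∑ j, refMatrix Q i j * L j := by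
            refine ge_of_tendsto hFlim ?_
            filter_upwards [Ioo_mem_nhdsLT_of_mem hTIoc] with s hs
            have h := h2 s ⟨hs.1.le, hs.2.le⟩ i
            have hsT : s ≠ T := ne_of_lt hs.2
            have hXis : Xi i s = ξ i s := by simp [hXi, hsT]
            rw [hXis] at h
            exact h
          have hLiT : Li ≤ ξ i T := by rw [← hξleft]; exact hpos i T hTIoc
          simp only [hζ'T]
          linarith
        · have h := h2 t ht i
          have hXit : Xi i t = ξ i t := by simp [hXi, htT]
          rw [hXit] at h
          simp only [hne _ t htT]
          exact h
    exact ⟨ζ', hfeas, hne, fun j => le_trans (le_of_eq (hζ'T j)) (hLle j)⟩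
  have hreg : ∀ i, ∀ t ∈ Set.Icc (0:ℝ) T, regulator T Q Xi i t = regulator T Q ξ i t := by
    intro i t ht
    unfold regulator
    have hbdd : ∀ ξ₀ : Fin d → ℝ → ℝ,
        BddBelow {z : ℝ | ∃ ζ, Feasible T Q ξ₀ ζ ∧ z = ζ i t} := by
      intro ξ₀
      refine ⟨0, ?_⟩
      rintro z ⟨ζ, hζ, rfl⟩
      exact le_trans (hζ.1 i).2.2 ((hζ.1 i).2.1 ⟨le_refl 0, hT.le⟩ ht ht.1)
    have hsub : {z : ℝ | ∃ ζ, Feasible T Q ξ ζ ∧ z = ζ i t} ⊆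
        {z : ℝ | ∃ ζ, Feasible T Q Xi ζ ∧ z = ζ i t} := by
      rintro z ⟨ζ, hζ, rfl⟩; exact ⟨ζ, hmono ζ hζ, rfl⟩
    have hdom : ∀ z ∈ {z : ℝ | ∃ ζ, Feasible T Q Xi ζ ∧ z = ζ i t},
        ∃ w ∈ {z : ℝ | ∃ ζ, Feasible T Q ξ ζ ∧ z = ζ i t}, w ≤ z := by
      rintro z ⟨ζ, hζ, rfl⟩
      obtain ⟨ζ', hfeas, hne, hle⟩ := hback ζ hζ
      refine ⟨ζ' i t, ⟨ζ', hfeas, rfl⟩, ?_⟩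
      by_cases htT : t = T
      · subst htT; exact hle i
      · exact le_of_eq (hne i t htT)
    rcases Set.eq_empty_or_nonempty
        ({z : ℝ | ∃ ζ, Feasible T Q Xi ζ ∧ z = ζ i t}) with hS'e | hS'ne
    · have hSe : {z : ℝ | ∃ ζ, Feasible T Q ξ ζ ∧ z = ζ i t} = ∅ :=
        Set.eq_empty_of_subset_empty (hS'e ▸ hsub)
      rw [hS'e, hSe]
    · obtain ⟨z0, hz0⟩ := hS'ne
      obtain ⟨w0, hw0, _⟩ := hdom z0 hz0
      refine le_antisymm (csInf_le_csInf (hbdd _) ⟨w0, hw0⟩ hsub) ?_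
      refine le_csInf ⟨z0, hz0⟩ fun z hz => ?_
      obtain ⟨w, hw, hwz⟩ := hdom z hz
      exact le_trans (csInf_le (hbdd _) hw) hwz
  refine ⟨hreg, ?_, ?_⟩
  · -- Part (ii)
    intro i
    unfold content
    have hr : ∀ j, regulator T Q Xi j T = regulator T Q ξ j T := fun j => hreg j T hTIcc
    simp only [hr]
    have hXiT : Xi i T = ξ i T + a i := by simp [hXi]
    rw [hXiT]; ring
  · -- Part (iii)
    intro α hα c hc
    have hα0 : (0:ℝ) ≤ α := hα.1.le
    have hα1 : α ≤ 1 := hα.2.le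
    have hcost : ∀ i, jumpCost T α (Xi i) ≤ jumpCost T α (ξ i) + a i ^ α := by
      intro i
      have hΔ : ∀ t ∈ Set.Ioc (0:ℝ) T, t ≠ T →
          Xi i t - Function.leftLim (Xi i) t = ξ i t - Function.leftLim (ξ i) t := by
        intro t ht htT
        rw [hll i t ht]
        have : Xi i t = ξ i t := by simp [hXi, htT]
        rw [this]
      have hΔT : Xi i T - Function.leftLim (Xi i) T
          = (ξ i T - Function.leftLim (ξ i) T) + a i := by
        rw [hll i T hTIoc]
        have : Xi i T = ξ i T + a i := by simp [hXi]
        rw [this]; ring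
      have hΔpos : ∀ t ∈ Set.Ioc (0:ℝ) T, 0 ≤ ξ i t - Function.leftLim (ξ i) t :=
        fun t ht => sub_nonneg.2 (hpos i t ht)
      rw [jumpCost_def, jumpCost_def]
      rcases (hone i).eq_empty_or_singleton with hD | ⟨t0, hD⟩
      · -- no discontinuity of ξ i
        have hzero : ∀ t ∈ Set.Ioc (0:ℝ) T, ξ i t - Function.leftLim (ξ i) t = 0 := by
          intro t ht
          have : Function.leftLim (ξ i) t = ξ i t := by
            by_contra h
            have hmem : t ∈ {t | t ∈ Set.Ioc (0:ℝ) T ∧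
              Function.leftLim (ξ i) t ≠ ξ i t} := ⟨ht, h⟩
            rw [hD] at hmem
            exact Set.notMem_empty t hmem
          rw [this]; ring
        have hJ : {t : ℝ | t ∈ Set.Ioc 0 T ∧ 0 < ξ i t - Function.leftLim (ξ i) t} = ∅ := by
          ext t; simp only [Set.mem_setOf_eq, Set.mem_empty_iff_false, iff_false, not_and]
          intro ht; rw [hzero t ht]; exact lt_irrefl 0
        rw [tsum_set_empty' (g := fun s => (ξ i s - Function.leftLim (ξ i) s) ^ α) hJ]
        by_cases hai : 0 < a i
        · have hJ' : {t : ℝ | t ∈ Set.Ioc 0 T ∧ 0 < Xi i t - Function.leftLim (Xi i) t}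
              = {T} := by
            ext t
            simp only [Set.mem_setOf_eq, Set.mem_singleton_iff]
            constructor
            · rintro ⟨ht, hpt⟩
              by_contra htT
              rw [hΔ t ht htT, hzero t ht] at hpt
              exact lt_irrefl 0 hpt
            · intro heq
              rw [heq]
              refine ⟨hTIoc, ?_⟩
              rw [hΔT, hzero T hTIoc]; linarith
          rw [tsum_set_singleton' (g := fun s => (Xi i s - Function.leftLim (Xi i) s) ^ α) hJ']
          rw [hΔT, hzero T hTIoc, zero_add, zero_add]
        · have hai0 : a i = 0 := le_antisymm (not_lt.1 hai) (ha i)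
          have hJ' : {t : ℝ | t ∈ Set.Ioc 0 T ∧ 0 < Xi i t - Function.leftLim (Xi i) t}
              = ∅ := by
            ext t
            simp only [Set.mem_setOf_eq, Set.mem_empty_iff_false, iff_false, not_and]
            intro ht
            by_cases htT : t = T
            · rw [htT, hΔT, hzero T hTIoc, hai0]; simp
            · rw [hΔ t ht htT, hzero t ht]; exact lt_irrefl 0
          rw [tsum_set_empty' (g := fun s => (Xi i s - Function.leftLim (Xi i) s) ^ α) hJ', zero_add]
          exact Real.rpow_nonneg (ha i) α
      · -- exactly one discontinuity point t0
        have ht0 : t0 ∈ Set.Ioc (0:ℝ) T ∧ Function.leftLim (ξ i) t0 ≠ ξ i t0 := by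
          have : t0 ∈ {t | t ∈ Set.Ioc (0:ℝ) T ∧ Function.leftLim (ξ i) t ≠ ξ i t} := by
            rw [hD]; exact Set.mem_singleton t0
          exact this
        have hjt0 : 0 < ξ i t0 - Function.leftLim (ξ i) t0 :=
          lt_of_le_of_ne (hΔpos t0 ht0.1) (fun h => ht0.2 (by linarith))
        have hzero : ∀ t ∈ Set.Ioc (0:ℝ) T, t ≠ t0 → ξ i t - Function.leftLim (ξ i) t = 0 := by
          intro t ht htt0
          have : Function.leftLim (ξ i) t = ξ i t := by
            by_contra h
            have : t ∈ {t | t ∈ Set.Ioc (0:ℝ) T ∧ Function.leftLim (ξ i) t ≠ ξ i t} := ⟨ht, h⟩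
            rw [hD] at this
            exact htt0 this
          rw [this]; ring
        have hJ : {t : ℝ | t ∈ Set.Ioc 0 T ∧ 0 < ξ i t - Function.leftLim (ξ i) t}
            = {t0} := by
          ext t
          simp only [Set.mem_setOf_eq, Set.mem_singleton_iff]
          constructor
          · rintro ⟨ht, hpt⟩
            by_contra htt0
            rw [hzero t ht htt0] at hpt
            exact lt_irrefl 0 hpt
          · intro heq; rw [heq]; exact ⟨ht0.1, hjt0⟩
        rw [tsum_set_singleton' (g := fun s => (ξ i s - Function.leftLim (ξ i) s) ^ α) hJ]
        by_cases ht0T : t0 = T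
        · -- jump of ξ at T itself
          have hJ' : {t : ℝ | t ∈ Set.Ioc 0 T ∧ 0 < Xi i t - Function.leftLim (Xi i) t}
              = {T} := by
            ext t
            simp only [Set.mem_setOf_eq, Set.mem_singleton_iff]
            constructor
            · rintro ⟨ht, hpt⟩
              by_contra htT
              rw [hΔ t ht htT, hzero t ht (fun hh => htT (hh.trans ht0T))] at hpt
              exact lt_irrefl 0 hpt
            · intro heq
              rw [heq]
              refine ⟨hTIoc, ?_⟩
              rw [hΔT]
              have h1 := hΔpos T hTIoc
              have h2 := ha i
              have h3 : 0 < ξ i T - Function.leftLim (ξ i) T := ht0T ▸ hjt0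
              linarith
          rw [tsum_set_singleton' (g := fun s => (Xi i s - Function.leftLim (Xi i) s) ^ α) hJ', hΔT, ht0T]
          exact rpow_subadd (hΔpos T hTIoc) (ha i) hα0 hα1
        · -- jump of ξ strictly before T
          have hΔTz : ξ i T - Function.leftLim (ξ i) T = 0 :=
            hzero T hTIoc (fun h => ht0T h.symm)
          by_cases hai : 0 < a i
          · have hJ' : {t : ℝ | t ∈ Set.Ioc 0 T ∧ 0 < Xi i t - Function.leftLim (Xi i) t}
                = {t0, T} := by
              ext t
              simp only [Set.mem_setOf_eq, Set.mem_insert_iff, Set.mem_singleton_iff]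
              constructor
              · rintro ⟨ht, hpt⟩
                by_cases htT : t = T
                · right; exact htT
                · left
                  by_contra htt0
                  rw [hΔ t ht htT, hzero t ht htt0] at hpt
                  exact lt_irrefl 0 hpt
              · rintro (heq | heq) <;> rw [heq]
                · refine ⟨ht0.1, ?_⟩
                  rw [hΔ t0 ht0.1 ht0T]
                  exact hjt0
                · refine ⟨hTIoc, ?_⟩
                  rw [hΔT, hΔTz]; linarith
            rw [tsum_set_pair' (g := fun s => (Xi i s - Function.leftLim (Xi i) s) ^ α) ht0T hJ', hΔ t0 ht0.1 ht0T, hΔT, hΔTz, zero_add]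
          · have hai0 : a i = 0 := le_antisymm (not_lt.1 hai) (ha i)
            have hJ' : {t : ℝ | t ∈ Set.Ioc 0 T ∧ 0 < Xi i t - Function.leftLim (Xi i) t}
                = {t0} := by
              ext t
              simp only [Set.mem_setOf_eq, Set.mem_singleton_iff]
              constructor
              · rintro ⟨ht, hpt⟩
                by_contra htt0
                by_cases htT : t = T
                · subst htT
                  rw [hΔT, hΔTz, hai0] at hpt
                  simp at hpt
                · rw [hΔ t ht htT, hzero t ht htt0] at hpt
                  exact lt_irrefl 0 hpt
              · intro heq
                rw [heq]
                refine ⟨ht0.1, ?_⟩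
                rw [hΔ t0 ht0.1 ht0T]
                exact hjt0
            rw [tsum_set_singleton' (g := fun s => (Xi i s - Function.leftLim (Xi i) s) ^ α) hJ', hΔ t0 ht0.1 ht0T]
            have : 0 ≤ a i ^ α := Real.rpow_nonneg (ha i) α
            linarith
    have hfun : ∀ i, (fun t => ξ i t + if t = T then a i else 0) = Xi i := fun i => rfl
    calc ∑ i, c i * jumpCost T α (fun t => ξ i t + if t = T then a i else 0)
        = ∑ i, c i * jumpCost T α (Xi i) := by simp only [hfun]
      _ ≤ ∑ i, c i * (jumpCost T α (ξ i) + a i ^ α) :=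
          Finset.sum_le_sum fun i _ => mul_le_mul_of_nonneg_left (hcost i) (hc i)
      _ = ∑ i, c i * jumpCost T α (ξ i) + ∑ i, c i * a i ^ α := by
          simp only [mul_add, Finset.sum_add_distrib]
end
end
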